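/- Let s > 1. There exists a constant C > 0, depending only on s and independent of k and L, such that (1/L) Σ_{ξ∈2πℤ/L} m(ξ)⁻² ≤ C. -/

import Mathlib

open scoped Classical BigOperators ENNReal

noncomputable section

/-- Japanese bracket `⟨x⟩ = (1 + x²)^{1/2}`. -/
def jap (x : ℝ) : ℝ := Real.sqrt (1 + x ^ 2)

/-- The frequency `ξ = 2πn/L ∈ 2πℤ/L`. -/
def freq (L : ℕ) (n : ℤ) : ℝ := 2 * Real.pi * (n : ℝ) / (L : ℝ)

/-- `τ` is an admissible `𝒩_r`-reduced residue for the integer `M` (where `ξ = 2π(M + j/L)`,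
`M = kη̃ + τ̃` with `η̃ ∈ {0,1,3,4}` and `−k/2 < τ̃ ≤ k/2`). -/
def NrWitness (k : ℝ) (M : ℤ) (τ : ℤ) : Prop :=
  ∃ η : ℤ, (η = 0 ∨ η = 1 ∨ η = 3 ∨ η = 4) ∧
    (M : ℝ) = k * (η : ℝ) + (τ : ℝ) ∧ -(k / 2) < (τ : ℝ) ∧ (τ : ℝ) ≤ k / 2

/-- The multiplier `m(ξ)` for `ξ = 2πn/L`, written via `n = L·M + j`, `0 ≤ j < L`:
`m(ξ) = ⟨τ̃⟩^(s−1/2)` on `𝒩_r`, `⟨k⟩^(s−1/2)` on `𝒩_l \ 𝒩_r`,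
`⟨k⟩^(s−1/2)⟨τ⟩^(1/2)` resp. `⟨k⟩^(s−1/2)⟨k−τ⟩^(1/2)` on `𝒩_m` with `ξ > 0` resp. `ξ < 0`,
and `⟨ξ⟩^s` on `𝒩_h`, where `M = kη + τ`, `0 ≤ τ < k`. -/
def mult (s k : ℝ) (L : ℕ) (n : ℤ) : ℝ :=
  let M : ℤ := Int.ediv n (L : ℤ)
  if h : ∃ τ : ℤ, NrWitness k M τ then jap ((h.choose : ℤ) : ℝ) ^ (s - 1 / 2)
  else
    let η : ℤ := ⌊(M : ℝ) / k⌋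
    let τ : ℝ := (M : ℝ) - k * (η : ℝ)
    if -99 ≤ η ∧ η ≤ 98 then jap k ^ (s - 1 / 2)
    else if η = 99 ∨ η = -100 then
      if 0 < n then jap k ^ (s - 1 / 2) * jap τ ^ ((1 : ℝ) / 2)
      else if n < 0 then jap k ^ (s - 1 / 2) * jap (k - τ) ^ ((1 : ℝ) / 2)
      else jap (freq L n) ^ s
    else jap (freq L n) ^ s

namespace Stmt15

lemma one_le_jap (x : ℝ) : 1 ≤ jap x :=
  Real.one_le_sqrt.mpr (by nlinarith [sq_nonneg x])

lemma jap_pos (x : ℝ) : 0 < jap x := lt_of_lt_of_le one_pos (one_le_jap x)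

lemma abs_le_jap (x : ℝ) : |x| ≤ jap x := by
  rw [jap, ← Real.sqrt_sq_eq_abs]
  exact Real.sqrt_le_sqrt (by nlinarith)

lemma sq_jap (x : ℝ) : jap x ^ 2 = 1 + x ^ 2 := Real.sq_sqrt (by positivity)

lemma one_div_rpow_sq {x : ℝ} (hx : 0 < x) (a : ℝ) :
    1 / (x ^ a) ^ 2 = x ^ (-(2 * a)) := by
  rw [← Real.rpow_natCast (x ^ a) 2, ← Real.rpow_mul hx.le, Real.rpow_neg hx.le, one_div]
  norm_num [mul_comm]

/-- auxiliary integer for the heavy-frequency bound -/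
def psi (M : ℤ) : ℤ := if 0 ≤ M then M else M + 1

def phi (M : ℤ) : ℝ := 2 / (1 + (psi M : ℝ) ^ 2)

def G1 (s k : ℝ) (M : ℤ) : ℝ :=
  if h : ∃ τ : ℤ, NrWitness k M τ then jap ((h.choose : ℤ) : ℝ) ^ (-(2 * s - 1)) else 0

def G2 (s k : ℝ) (M : ℤ) : ℝ :=
  if -100 ≤ ⌊(M : ℝ) / k⌋ ∧ ⌊(M : ℝ) / k⌋ ≤ 99 then jap k ^ (-(2 * s - 1)) else 0

def W (s k : ℝ) (M : ℤ) : ℝ := G1 s k M + G2 s k M + phi M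

lemma phi_nonneg (M : ℤ) : 0 ≤ phi M := by unfold phi; positivity

lemma G1_nonneg (s k : ℝ) (M : ℤ) : 0 ≤ G1 s k M := by
  unfold G1; split_ifs
  · exact Real.rpow_nonneg (jap_pos _).le _
  · exact le_refl 0

lemma G2_nonneg (s k : ℝ) (M : ℤ) : 0 ≤ G2 s k M := by
  unfold G2; split_ifs
  · exact Real.rpow_nonneg (jap_pos _).le _
  · exact le_refl 0


lemma key_sq (L : ℕ) (hL : 0 < L) (n : ℤ) :
    ((psi (Int.ediv n (L : ℤ)) : ℝ)) ^ 2 * (L : ℝ) ^ 2 ≤ (n : ℝ) ^ 2 := by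
  have hL' : ((L : ℤ)) ≠ 0 := Int.natCast_ne_zero.mpr hL.ne'
  have hLpos : (0 : ℤ) < (L : ℤ) := by exact_mod_cast hL
  set M : ℤ := Int.ediv n (L : ℤ) with hM
  have heq : (L : ℤ) * M + n % (L : ℤ) = n := Int.mul_ediv_add_emod n (L : ℤ)
  have hr0 : 0 ≤ n % (L : ℤ) := Int.emod_nonneg n hL'
  have hrlt : n % (L : ℤ) < (L : ℤ) := Int.emod_lt_of_pos n hLpos
  have keyZ : (psi M * (L : ℤ)) ^ 2 ≤ n ^ 2 := by
    unfold psi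
    split_ifs with h
    · have h1 : 0 ≤ (L : ℤ) * M := mul_nonneg hLpos.le h
      have h2 : (L : ℤ) * M ≤ n := by linarith
      nlinarith
    · have h1 : (L : ℤ) * (M + 1) ≤ 0 := by
        have : M + 1 ≤ 0 := by omega
        exact mul_nonpos_of_nonneg_of_nonpos hLpos.le this
      have h2 : n ≤ (L : ℤ) * (M + 1) - 1 := by linarith
      nlinarith
  have hcast : ((psi M : ℝ) * (L : ℝ)) ^ 2 ≤ (n : ℝ) ^ 2 := by exact_mod_cast keyZ
  nlinarith [hcast]

lemma freq_le (s : ℝ) (hs : 1 < s) (L : ℕ) (hL : 0 < L) (n : ℤ) :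
    1 / (jap (freq L n) ^ s) ^ 2 ≤ phi (Int.ediv n (L : ℤ)) := by
  set M : ℤ := Int.ediv n (L : ℤ) with hM
  have hx := jap_pos (freq L n)
  rw [one_div_rpow_sq hx]
  have hLR : (0 : ℝ) < (L : ℝ) := by exact_mod_cast hL
  have hfr : ((psi M : ℝ)) ^ 2 ≤ freq L n ^ 2 := by
    have hk := key_sq L hL n
    have hπ := Real.pi_gt_three
    rw [freq]
    rw [div_pow, le_div_iff₀ (by positivity)]
    calc (psi M : ℝ) ^ 2 * (L : ℝ) ^ 2 ≤ (n : ℝ) ^ 2 := hk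
      _ ≤ (2 * Real.pi * (n : ℝ)) ^ 2 := by
          have h4 : (0:ℝ) ≤ (4 * Real.pi ^ 2 - 1) * (n : ℝ) ^ 2 :=
            mul_nonneg (by nlinarith) (sq_nonneg _)
          nlinarith [h4]
  have h1 : 1 + (psi M : ℝ) ^ 2 ≤ jap (freq L n) ^ (2 * s) := by
    have e2 : jap (freq L n) ^ ((2 : ℕ) : ℝ) ≤ jap (freq L n) ^ (2 * s) :=
      Real.rpow_le_rpow_of_exponent_le (one_le_jap _) (by push_cast; linarith)
    rw [Real.rpow_natCast, sq_jap] at e2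
    linarith
  rw [Real.rpow_neg hx.le, inv_eq_one_div, phi]
  have hp : (0 : ℝ) < 1 + (psi M : ℝ) ^ 2 := by positivity
  calc 1 / jap (freq L n) ^ (2 * s) ≤ 1 / (1 + (psi M : ℝ) ^ 2) :=
        one_div_le_one_div_of_le hp h1
    _ ≤ 2 / (1 + (psi M : ℝ) ^ 2) := by
        gcongr
        norm_num
    _ = phi M := rfl


lemma mult_le (s k : ℝ) (hs : 1 < s) (L : ℕ) (hL : 0 < L) (hk : 0 < k) (n : ℤ) :
    1 / mult s k L n ^ 2 ≤ W s k (Int.ediv n (L : ℤ)) := by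
  have hjk := jap_pos k
  have hexp : -(2 * (s - 1 / 2)) = -(2 * s - 1) := by ring
  rw [mult]
  simp only []
  split_ifs with h h1 h2 h3 h4
  · -- Nr branch
    rw [one_div_rpow_sq (jap_pos _), hexp]
    have hG1 : G1 s k (Int.ediv n (L : ℤ)) = jap ((h.choose : ℤ) : ℝ) ^ (-(2 * s - 1)) := by
      rw [G1, dif_pos h]
    rw [W, hG1]
    linarith [G2_nonneg s k (Int.ediv n (L:ℤ)), phi_nonneg (Int.ediv n (L:ℤ))]
  · -- Nl branch
    rw [one_div_rpow_sq hjk, hexp]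
    have hG2 : G2 s k (Int.ediv n (L : ℤ)) = jap k ^ (-(2 * s - 1)) := by
      rw [G2, if_pos ⟨by omega, by omega⟩]
    rw [W, hG2]
    linarith [G1_nonneg s k (Int.ediv n (L:ℤ)), phi_nonneg (Int.ediv n (L:ℤ))]
  · -- Nm branch, n > 0
    set τ : ℝ := ((Int.ediv n (L:ℤ) : ℤ) : ℝ) - k * ((⌊((Int.ediv n (L:ℤ) : ℤ) : ℝ) / k⌋ : ℤ) : ℝ)
    have hy : 1 ≤ jap τ ^ ((1:ℝ)/2) := Real.one_le_rpow (one_le_jap _) (by norm_num)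
    have hxa : 0 < jap k ^ (s - 1/2) := Real.rpow_pos_of_pos hjk _
    have step : 1 / (jap k ^ (s - 1/2) * jap τ ^ ((1:ℝ)/2)) ^ 2 ≤ 1 / (jap k ^ (s - 1/2)) ^ 2 := by
      apply one_div_le_one_div_of_le (by positivity)
      have hy2 : 1 ≤ (jap τ ^ ((1:ℝ)/2)) ^ 2 := by nlinarith [hy]
      nlinarith [mul_pow (jap k ^ (s - 1/2)) (jap τ ^ ((1:ℝ)/2)) 2, hy2, sq_nonneg (jap k ^ (s - 1/2))]
    refine step.trans ?_
    rw [one_div_rpow_sq hjk, hexp]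
    have hG2 : G2 s k (Int.ediv n (L : ℤ)) = jap k ^ (-(2 * s - 1)) := by
      rw [G2, if_pos ⟨by omega, by omega⟩]
    rw [W, hG2]
    linarith [G1_nonneg s k (Int.ediv n (L:ℤ)), phi_nonneg (Int.ediv n (L:ℤ))]
  · -- Nm branch, n < 0
    set τ : ℝ := ((Int.ediv n (L:ℤ) : ℤ) : ℝ) - k * ((⌊((Int.ediv n (L:ℤ) : ℤ) : ℝ) / k⌋ : ℤ) : ℝ)
    have hy : 1 ≤ jap (k - τ) ^ ((1:ℝ)/2) := Real.one_le_rpow (one_le_jap _) (by norm_num)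
    have hxa : 0 < jap k ^ (s - 1/2) := Real.rpow_pos_of_pos hjk _
    have step : 1 / (jap k ^ (s - 1/2) * jap (k - τ) ^ ((1:ℝ)/2)) ^ 2 ≤ 1 / (jap k ^ (s - 1/2)) ^ 2 := by
      apply one_div_le_one_div_of_le (by positivity)
      have hy2 : 1 ≤ (jap (k - τ) ^ ((1:ℝ)/2)) ^ 2 := by nlinarith [hy]
      nlinarith [mul_pow (jap k ^ (s - 1/2)) (jap (k - τ) ^ ((1:ℝ)/2)) 2, hy2, sq_nonneg (jap k ^ (s - 1/2))]
    refine step.trans ?_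
    rw [one_div_rpow_sq hjk, hexp]
    have hG2 : G2 s k (Int.ediv n (L : ℤ)) = jap k ^ (-(2 * s - 1)) := by
      rw [G2, if_pos ⟨by omega, by omega⟩]
    rw [W, hG2]
    linarith [G1_nonneg s k (Int.ediv n (L:ℤ)), phi_nonneg (Int.ediv n (L:ℤ))]
  · -- Nm branch, n = 0 : heavy bound
    refine (freq_le s hs L hL n).trans ?_
    rw [W]
    linarith [G1_nonneg s k (Int.ediv n (L:ℤ)), G2_nonneg s k (Int.ediv n (L:ℤ))]
  · -- Nh branch
    refine (freq_le s hs L hL n).trans ?_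
    rw [W]
    linarith [G1_nonneg s k (Int.ediv n (L:ℤ)), G2_nonneg s k (Int.ediv n (L:ℤ))]


lemma ediv_fiber (L : ℕ) (hL : 0 < L) (M : ℤ) (j : ℕ) (hj : j < L) :
    Int.ediv (M * (L : ℤ) + (j : ℤ)) (L : ℤ) = M := by
  have hL' : ((L : ℤ)) ≠ 0 := Int.natCast_ne_zero.mpr hL.ne'
  show (M * (L : ℤ) + (j : ℤ)) / (L : ℤ) = M
  rw [show M * (L : ℤ) + (j : ℤ) = (j : ℤ) + (L : ℤ) * M by ring,
      Int.add_mul_ediv_left _ _ hL',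
      Int.ediv_eq_zero_of_lt (by positivity) (by exact_mod_cast hj), zero_add]

lemma tsum_fiber (L : ℕ) (hL : 0 < L) (f : ℤ → ℝ≥0∞) :
    ∑' n : ℤ, f (Int.ediv n (L : ℤ)) = (L : ℝ≥0∞) * ∑' M : ℤ, f M := by
  have hL' : ((L : ℤ)) ≠ 0 := Int.natCast_ne_zero.mpr hL.ne'
  have hLpos : (0 : ℤ) < (L : ℤ) := by exact_mod_cast hL
  let e : ℤ × Fin L ≃ ℤ :=
  { toFun := fun p => p.1 * (L : ℤ) + ((p.2 : ℕ) : ℤ)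
    invFun := fun n => (Int.ediv n (L : ℤ), ⟨(n % (L : ℤ)).toNat, by
      have h1 := Int.emod_nonneg n hL'
      have h2 := Int.emod_lt_of_pos n hLpos
      omega⟩)
    left_inv := by
      rintro ⟨M, j⟩
      have hj : ((j : ℕ) : ℤ) < (L : ℤ) := by exact_mod_cast j.isLt
      have hmod : (M * (L : ℤ) + ((j : ℕ) : ℤ)) % (L : ℤ) = ((j : ℕ) : ℤ) := by
        rw [show M * (L : ℤ) + ((j : ℕ) : ℤ) = ((j : ℕ) : ℤ) + (L : ℤ) * M by ring,
            Int.add_mul_emod_self_left, Int.emod_eq_of_lt (by positivity) hj]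
      refine Prod.ext ?_ ?_
      · exact ediv_fiber L hL M j j.isLt
      · simp only [hmod]
        ext
        simp
    right_inv := by
      intro n
      simp only []
      have h1 := Int.emod_nonneg n hL'
      have ht : (((n % (L : ℤ)).toNat : ℕ) : ℤ) = n % (L : ℤ) := Int.toNat_of_nonneg h1
      show Int.ediv n (L : ℤ) * (L : ℤ) + _ = n
      rw [ht]
      have := Int.mul_ediv_add_emod n (L : ℤ)
      show n / (L : ℤ) * (L : ℤ) + n % (L : ℤ) = n
      linarith }
  calc ∑' n : ℤ, f (Int.ediv n (L : ℤ))
      = ∑' p : ℤ × Fin L, f (Int.ediv (e p) (L : ℤ)) :=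
        (e.tsum_eq (fun n => f (Int.ediv n (L : ℤ)))).symm
    _ = ∑' p : ℤ × Fin L, f p.1 := by
        refine tsum_congr fun p => ?_
        have : Int.ediv (e p) (L : ℤ) = p.1 := ediv_fiber L hL p.1 p.2 p.2.isLt
        rw [this]
    _ = ∑' M : ℤ, ∑' _ : Fin L, f M := ENNReal.tsum_prod (f := fun a _ => f a)
    _ = ∑' M : ℤ, (L : ℝ≥0∞) * f M := by
        refine tsum_congr fun M => ?_
        rw [tsum_fintype]
        simp [Finset.card_univ, nsmul_eq_mul]
    _ = (L : ℝ≥0∞) * ∑' M : ℤ, f M := ENNReal.tsum_mul_left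


def Stau (s : ℝ) : ℝ := ∑' b : ℤ, |(b : ℝ)| ^ (-(2 * s - 1))

lemma Stau_nonneg (s : ℝ) : 0 ≤ Stau s :=
  tsum_nonneg fun b => Real.rpow_nonneg (abs_nonneg _) _

lemma G1_sum (s k : ℝ) (hs : 1 < s) (hk : 0 < k) :
    ∑' M : ℤ, ENNReal.ofReal (G1 s k M) ≤ 4 * ENNReal.ofReal (1 + Stau s) := by
  classical
  set H : ℤ × ℤ → ℝ≥0∞ := fun p =>
    if p.1 = 0 ∨ p.1 = 1 ∨ p.1 = 3 ∨ p.1 = 4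
    then ENNReal.ofReal (jap ((p.2 : ℤ) : ℝ) ^ (-(2 * s - 1))) else 0 with hH
  set ι : ℤ → ℤ × ℤ := fun M =>
    if h : ∃ τ : ℤ, NrWitness k M τ then (h.choose_spec.choose, h.choose) else (2, M) with hι
  have hinj : Function.Injective ι := by
    intro M₁ M₂ hMM
    by_cases h1 : ∃ τ : ℤ, NrWitness k M₁ τ <;> by_cases h2 : ∃ τ : ℤ, NrWitness k M₂ τ
    · simp only [hι, dif_pos h1, dif_pos h2, Prod.mk.injEq] at hMM
      obtain ⟨hη, hτ⟩ := hMM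
      have e1 := h1.choose_spec.choose_spec.2.1
      have e2 := h2.choose_spec.choose_spec.2.1
      have : (M₁ : ℝ) = (M₂ : ℝ) := by rw [e1, e2, hη, hτ]
      exact_mod_cast this
    · exfalso
      simp only [hι, dif_pos h1, dif_neg h2, Prod.mk.injEq] at hMM
      have := h1.choose_spec.choose_spec.1
      omega
    · exfalso
      simp only [hι, dif_neg h1, dif_pos h2, Prod.mk.injEq] at hMM
      have := h2.choose_spec.choose_spec.1
      omega
    · simp only [hι, dif_neg h1, dif_neg h2, Prod.mk.injEq] at hMM
      exact hMM.2
  have hpt : ∀ M : ℤ, ENNReal.ofReal (G1 s k M) = H (ι M) := by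
    intro M
    by_cases h : ∃ τ : ℤ, NrWitness k M τ
    · rw [G1, dif_pos h]
      simp only [hι, dif_pos h, hH]
      rw [if_pos h.choose_spec.choose_spec.1]
    · rw [G1, dif_neg h]
      simp only [hι, dif_neg h, hH]
      rw [if_neg (by norm_num), ENNReal.ofReal_zero]
  have hS : ∑' b : ℤ, ENNReal.ofReal (jap ((b : ℤ) : ℝ) ^ (-(2 * s - 1)))
      ≤ ENNReal.ofReal (1 + Stau s) := by
    have hsum : Summable fun b : ℤ => |(b : ℝ)| ^ (-(2 * s - 1)) := by
      have := Real.summable_abs_int_rpow (b := 2 * s - 1) (by linarith)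
      simpa using this
    rw [ENNReal.tsum_eq_add_tsum_ite (0 : ℤ)]
    have h0 : ENNReal.ofReal (jap ((0 : ℤ) : ℝ) ^ (-(2 * s - 1))) = 1 := by
      have : jap (0 : ℝ) = 1 := by rw [jap]; norm_num
      norm_num [this]
    rw [h0]
    refine le_trans (add_le_add_right (c := ENNReal.ofReal (Stau s)) ?_ 1) ?_
    · rw [Stau, ENNReal.ofReal_tsum_of_nonneg (fun b => Real.rpow_nonneg (abs_nonneg _) _) hsum]
      refine ENNReal.tsum_le_tsum fun b => ?_
      by_cases hb : b = 0
      · simp [hb]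
      · rw [if_neg hb]
        refine ENNReal.ofReal_le_ofReal ?_
        refine Real.rpow_le_rpow_of_nonpos ?_ (abs_le_jap _) (by linarith)
        simpa using hb
    · rw [ENNReal.ofReal_add (by norm_num) (Stau_nonneg s), ENNReal.ofReal_one]
  calc ∑' M : ℤ, ENNReal.ofReal (G1 s k M) = ∑' M : ℤ, H (ι M) := tsum_congr hpt
    _ ≤ ∑' p : ℤ × ℤ, H p := ENNReal.tsum_comp_le_tsum_of_injective hinj H
    _ = ∑' a : ℤ, ∑' b : ℤ, (if a = 0 ∨ a = 1 ∨ a = 3 ∨ a = 4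
          then ENNReal.ofReal (jap ((b : ℤ) : ℝ) ^ (-(2 * s - 1))) else 0) :=
        ENNReal.tsum_prod (f := fun a b => if a = 0 ∨ a = 1 ∨ a = 3 ∨ a = 4
          then ENNReal.ofReal (jap ((b : ℤ) : ℝ) ^ (-(2 * s - 1))) else 0)
    _ = ∑' a : ℤ, (if a = 0 ∨ a = 1 ∨ a = 3 ∨ a = 4
          then (∑' b : ℤ, ENNReal.ofReal (jap ((b : ℤ) : ℝ) ^ (-(2 * s - 1)))) else 0) := by
        refine tsum_congr fun a => ?_
        split_ifs <;> simp
    _ = ∑ a ∈ ({0, 1, 3, 4} : Finset ℤ), (if a = 0 ∨ a = 1 ∨ a = 3 ∨ a = 4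
          then (∑' b : ℤ, ENNReal.ofReal (jap ((b : ℤ) : ℝ) ^ (-(2 * s - 1)))) else 0) := by
        refine tsum_eq_sum fun a ha => ?_
        rw [if_neg]
        simp only [Finset.mem_insert, Finset.mem_singleton] at ha
        tauto
    _ = 4 * ∑' b : ℤ, ENNReal.ofReal (jap ((b : ℤ) : ℝ) ^ (-(2 * s - 1))) := by
        rw [show ({0, 1, 3, 4} : Finset ℤ) = {0, 1, 3, 4} from rfl]
        repeat rw [Finset.sum_insert (by decide)]
        rw [Finset.sum_singleton]
        norm_num
        ring
    _ ≤ 4 * ENNReal.ofReal (1 + Stau s) := by gcongr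


lemma G2_sum (s k : ℝ) (hs : 1 < s) (hk : 0 < k) :
    ∑' M : ℤ, ENNReal.ofReal (G2 s k M) ≤ ENNReal.ofReal 201 := by
  set a : ℤ := ⌈-(100 * k)⌉ with ha
  set b : ℤ := ⌊100 * k⌋ with hb
  have hsupp : ∀ M ∉ Finset.Icc a b, ENNReal.ofReal (G2 s k M) = 0 := by
    intro M hM
    rw [G2, if_neg, ENNReal.ofReal_zero]
    rintro ⟨hc1, hc2⟩
    apply hM
    rw [Finset.mem_Icc]
    constructor
    · rw [ha, Int.ceil_le]
      have h1 : (-100 : ℝ) ≤ (M : ℝ) / k := by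
        have := (Int.le_floor (z := (-100 : ℤ))).mp hc1
        push_cast at this ⊢
        linarith
      have := (div_le_div_iff_of_pos_right hk).mpr h1
      nlinarith [(le_div_iff₀ hk).mp h1]
    · rw [hb, Int.le_floor]
      have h2 : (M : ℝ) / k < 100 := by
        have := Int.lt_floor_add_one ((M : ℝ) / k)
        have hc2' : ((⌊(M : ℝ) / k⌋ : ℤ) : ℝ) ≤ 99 := by exact_mod_cast hc2
        linarith
      push_cast
      nlinarith [(div_lt_iff₀ hk).mp h2]
  rw [tsum_eq_sum hsupp]
  have hstep : ∑ M ∈ Finset.Icc a b, ENNReal.ofReal (G2 s k M)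
      ≤ (Finset.Icc a b).card • ENNReal.ofReal (jap k ^ (-(2 * s - 1))) := by
    rw [← Finset.sum_const]
    refine Finset.sum_le_sum fun M _ => ?_
    rw [G2]
    split_ifs
    · exact le_rfl
    · simp
  refine hstep.trans ?_
  have hm1 : (1 : ℝ) ≤ max 1 k := le_max_left 1 k
  have hmk : k ≤ max 1 k := le_max_right 1 k
  have hm0 : (0 : ℝ) < max 1 k := lt_of_lt_of_le one_pos hm1
  have hcard : ((Finset.Icc a b).card : ℝ) ≤ 201 * max 1 k := by
    rw [Int.card_Icc]
    rcases le_or_gt (b + 1 - a) 0 with hneg | hpos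
    · rw [Int.toNat_of_nonpos hneg]
      simp only [Nat.cast_zero]
      positivity
    · have : ((b + 1 - a).toNat : ℤ) = b + 1 - a := Int.toNat_of_nonneg hpos.le
      have h1 : (b : ℝ) ≤ 100 * k := Int.floor_le _
      have h2 : -(100 * k) ≤ (a : ℝ) := Int.le_ceil _
      have : (((b + 1 - a).toNat : ℤ) : ℝ) = (b : ℝ) + 1 - (a : ℝ) := by
        rw [this]; push_cast; ring
      calc ((b + 1 - a).toNat : ℝ) = (b : ℝ) + 1 - (a : ℝ) := by exact_mod_cast this
        _ ≤ 100 * k + 1 + 100 * k := by linarith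
        _ ≤ 201 * max 1 k := by nlinarith
  have hv : jap k ^ (-(2 * s - 1)) ≤ (max 1 k) ^ (-(2 * s - 1)) := by
    refine Real.rpow_le_rpow_of_nonpos hm0 ?_ (by linarith)
    exact max_le (one_le_jap k) ((le_abs_self k).trans (abs_le_jap k))
  have hprod : (201 * max 1 k) * (max 1 k) ^ (-(2 * s - 1)) ≤ 201 := by
    have e1 : max 1 k * (max 1 k) ^ (-(2 * s - 1)) = (max 1 k) ^ (1 + -(2 * s - 1)) := by
      rw [Real.rpow_add hm0, Real.rpow_one]
    have e2 : (max 1 k) ^ (1 + -(2 * s - 1)) ≤ 1 :=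
      Real.rpow_le_one_of_one_le_of_nonpos hm1 (by linarith)
    calc (201 * max 1 k) * (max 1 k) ^ (-(2 * s - 1))
        = 201 * ((max 1 k) ^ (1 + -(2 * s - 1))) := by rw [← e1]; ring
      _ ≤ 201 * 1 := by nlinarith
      _ = 201 := by ring
  calc (Finset.Icc a b).card • ENNReal.ofReal (jap k ^ (-(2 * s - 1)))
      = ENNReal.ofReal (((Finset.Icc a b).card : ℝ) * jap k ^ (-(2 * s - 1))) := by
        rw [nsmul_eq_mul, ← ENNReal.ofReal_natCast ((Finset.Icc a b).card),
          ← ENNReal.ofReal_mul (by positivity)]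
    _ ≤ ENNReal.ofReal 201 := by
        refine ENNReal.ofReal_le_ofReal ?_
        have hvpos : 0 ≤ jap k ^ (-(2 * s - 1)) := Real.rpow_nonneg (jap_pos k).le _
        have hmp : 0 ≤ (max 1 k) ^ (-(2 * s - 1)) := Real.rpow_nonneg hm0.le _
        calc ((Finset.Icc a b).card : ℝ) * jap k ^ (-(2 * s - 1))
            ≤ (201 * max 1 k) * (max 1 k) ^ (-(2 * s - 1)) :=
              mul_le_mul hcard hv hvpos (by positivity)
          _ ≤ 201 := hprod

def S2 : ℝ := ∑' M : ℤ, 2 / (1 + (M : ℝ) ^ 2)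

lemma summable_S2 : Summable (fun M : ℤ => 2 / (1 + (M : ℝ) ^ 2)) := by
  have hnat : Summable (fun n : ℕ => 2 / (1 + (n : ℝ) ^ 2)) := by
    have h1 : Summable (fun n : ℕ => 1 / (n : ℝ) ^ 2) :=
      Real.summable_one_div_nat_pow.mpr one_lt_two
    have h2 : Summable (fun n : ℕ => 4 * (1 / ((n + 1 : ℕ) : ℝ) ^ 2)) :=
      ((summable_nat_add_iff 1).mpr h1).mul_left 4
    refine Summable.of_nonneg_of_le (fun n => by positivity) (fun n => ?_) h2
    have hp : (0 : ℝ) < 1 + (n : ℝ) ^ 2 := by positivity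
    have hq : (0 : ℝ) < ((n + 1 : ℕ) : ℝ) ^ 2 := by positivity
    have hform : 4 * (1 / ((n + 1 : ℕ) : ℝ) ^ 2) = 4 / ((n + 1 : ℕ) : ℝ) ^ 2 := by ring
    rw [hform, div_le_div_iff₀ hp hq]
    push_cast
    nlinarith [sq_nonneg ((n : ℝ) - 1)]
  apply Summable.of_nat_of_neg
  · exact hnat
  · refine hnat.congr fun n => ?_
    push_cast
    rw [neg_sq]

lemma S2_nonneg : 0 ≤ S2 := tsum_nonneg fun M => by positivity

lemma phi_sum : ∑' M : ℤ, ENNReal.ofReal (phi M) ≤ ENNReal.ofReal (2 * S2) := by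
  have hof : ∑' M : ℤ, ENNReal.ofReal (2 / (1 + (M : ℝ) ^ 2)) = ENNReal.ofReal S2 := by
    rw [S2, ENNReal.ofReal_tsum_of_nonneg (fun M => by positivity) summable_S2]
  have h1 : ∀ M : ℤ, ENNReal.ofReal (phi M) ≤
      ENNReal.ofReal (2 / (1 + (M : ℝ) ^ 2)) + ENNReal.ofReal (2 / (1 + ((M + 1 : ℤ) : ℝ) ^ 2)) := by
    intro M
    rw [phi, psi]
    split_ifs with h
    · exact le_add_right le_rfl
    · exact le_add_left (le_of_eq (by push_cast; ring_nf))
  calc ∑' M : ℤ, ENNReal.ofReal (phi M)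
      ≤ ∑' M : ℤ, (ENNReal.ofReal (2 / (1 + (M : ℝ) ^ 2))
          + ENNReal.ofReal (2 / (1 + ((M + 1 : ℤ) : ℝ) ^ 2))) := ENNReal.tsum_le_tsum h1
    _ = (∑' M : ℤ, ENNReal.ofReal (2 / (1 + (M : ℝ) ^ 2)))
          + ∑' M : ℤ, ENNReal.ofReal (2 / (1 + ((M + 1 : ℤ) : ℝ) ^ 2)) := ENNReal.tsum_add
    _ = ENNReal.ofReal S2 + ENNReal.ofReal S2 := by
        rw [hof]
        congr 1
        rw [← hof]
        exact (Equiv.addRight (1 : ℤ)).tsum_eq (fun M => ENNReal.ofReal (2 / (1 + (M : ℝ) ^ 2)))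
    _ = ENNReal.ofReal (2 * S2) := by
        rw [← ENNReal.ofReal_add S2_nonneg S2_nonneg]; ring_nf
end Stmt15

open Stmt15

/-- `(1/L) Σ_ξ m(ξ)⁻² ≤ C` with `C` depending only on `s > 1`. -/
theorem stmt_15 (s : ℝ) (hs : 1 < s) :
    ∃ C : ℝ, 0 < C ∧ ∀ (L : ℕ) (k : ℝ), 0 < L → 0 < k →
      (∃ K : ℕ, (K : ℝ) = (L : ℝ) * k) →
      ∑' n : ℤ, ENNReal.ofReal (1 / mult s k L n ^ 2) ≤
        ENNReal.ofReal (C * (L : ℝ)) := by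
  refine ⟨4 * (1 + Stau s) + 201 + 2 * S2, ?_, ?_⟩
  · have h1 := Stau_nonneg s
    have h2 := S2_nonneg
    linarith
  · intro L k hL hk _
    have hC : (0 : ℝ) ≤ 4 * (1 + Stau s) + 201 + 2 * S2 := by
      have h1 := Stau_nonneg s
      have h2 := S2_nonneg
      linarith
    have hstep1 : ∑' n : ℤ, ENNReal.ofReal (1 / mult s k L n ^ 2)
        ≤ ∑' n : ℤ, ENNReal.ofReal (W s k (Int.ediv n (L : ℤ))) :=
      ENNReal.tsum_le_tsum fun n => ENNReal.ofReal_le_ofReal (mult_le s k hs L hL hk n)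
    have hW : ∑' M : ℤ, ENNReal.ofReal (W s k M)
        ≤ ENNReal.ofReal (4 * (1 + Stau s) + 201 + 2 * S2) := by
      have hsplit : ∀ M : ℤ, ENNReal.ofReal (W s k M) ≤
          ENNReal.ofReal (G1 s k M) + ENNReal.ofReal (G2 s k M) + ENNReal.ofReal (phi M) := by
        intro M
        rw [W]
        exact le_trans ENNReal.ofReal_add_le (add_le_add_left ENNReal.ofReal_add_le _)
      calc ∑' M : ℤ, ENNReal.ofReal (W s k M)
          ≤ ∑' M : ℤ, (ENNReal.ofReal (G1 s k M) + ENNReal.ofReal (G2 s k M)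
              + ENNReal.ofReal (phi M)) := ENNReal.tsum_le_tsum hsplit
        _ = (∑' M : ℤ, (ENNReal.ofReal (G1 s k M) + ENNReal.ofReal (G2 s k M)))
              + ∑' M : ℤ, ENNReal.ofReal (phi M) := ENNReal.tsum_add
        _ = ((∑' M : ℤ, ENNReal.ofReal (G1 s k M)) + ∑' M : ℤ, ENNReal.ofReal (G2 s k M))
              + ∑' M : ℤ, ENNReal.ofReal (phi M) := by rw [ENNReal.tsum_add]
        _ ≤ (4 * ENNReal.ofReal (1 + Stau s) + ENNReal.ofReal 201) + ENNReal.ofReal (2 * S2) :=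
            add_le_add (add_le_add (G1_sum s k hs hk) (G2_sum s k hs hk)) phi_sum
        _ = ENNReal.ofReal (4 * (1 + Stau s) + 201 + 2 * S2) := by
            have h1 := Stau_nonneg s
            have h2 := S2_nonneg
            rw [show (4 : ℝ≥0∞) = ENNReal.ofReal (4 : ℝ) by norm_num,
              ← ENNReal.ofReal_mul (by norm_num),
              ← ENNReal.ofReal_add (by linarith) (by norm_num),
              ← ENNReal.ofReal_add (by linarith) (by linarith)]
    calc ∑' n : ℤ, ENNReal.ofReal (1 / mult s k L n ^ 2)
        ≤ ∑' n : ℤ, ENNReal.ofReal (W s k (Int.ediv n (L : ℤ))) := hstep1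
      _ = (L : ℝ≥0∞) * ∑' M : ℤ, ENNReal.ofReal (W s k M) :=
          tsum_fiber L hL (fun M => ENNReal.ofReal (W s k M))
      _ ≤ (L : ℝ≥0∞) * ENNReal.ofReal (4 * (1 + Stau s) + 201 + 2 * S2) :=
          mul_le_mul_right hW _
      _ = ENNReal.ofReal ((4 * (1 + Stau s) + 201 + 2 * S2) * (L : ℝ)) := by
          rw [ENNReal.ofReal_mul hC, ENNReal.ofReal_natCast, mul_comm]
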